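/- Let A be s.p.d. with block structure 𝔅 and let F be the block-FSAI matrix based on a lower-triangular block sparsity pattern 𝒫 (containing the diagonal), i.e., F has identity diagonal blocks and F[{i}, 𝒫̃_i] = −A[{i}, 𝒫̃_i] A[𝒫̃_i, 𝒫̃_i]⁻¹ for each block row i, where 𝒫̃_i = 𝒫_i \ {i}. Let S be the block-diagonal matrix with S_{ii} = A_{ii} − A[{i}, 𝒫̃_i] A[𝒫̃_i, 𝒫̃_i]⁻¹ A[𝒫̃_i, {i}]. Then diag_𝔅(F A) = S = diag_𝔅(F A Fᵀ). -/

import Mathlib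

open Matrix

/-- Scalar index type for a block structure with `n` blocks of sizes `m i`. -/
abbrev BIdx {n : ℕ} (m : Fin n → ℕ) := (i : Fin n) × Fin (m i)

/-- The `(i,j)` block of a block-structured matrix. -/
def blk {n : ℕ} {m : Fin n → ℕ} (A : Matrix (BIdx m) (BIdx m) ℝ) (i j : Fin n) :
    Matrix (Fin (m i)) (Fin (m j)) ℝ :=
  fun a b => A ⟨i, a⟩ ⟨j, b⟩

/-- The block-diagonal part `diag_𝔅(A)` of a block-structured matrix. -/
def bdiag {n : ℕ} {m : Fin n → ℕ} (A : Matrix (BIdx m) (BIdx m) ℝ) :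
    Matrix (BIdx m) (BIdx m) ℝ :=
  fun p q => if p.1 = q.1 then A p q else 0

/-- The block submatrix `A[S, T]` with block-row indices in `S` and block-column indices in `T`. -/
def subM {n : ℕ} {m : Fin n → ℕ} (A : Matrix (BIdx m) (BIdx m) ℝ) (S T : Finset (Fin n)) :
    Matrix {p : BIdx m // p.1 ∈ S} {q : BIdx m // q.1 ∈ T} ℝ :=
  fun p q => A p.val q.val

/-- The block row submatrix `A[{i}, T]`. -/
def rowM {n : ℕ} {m : Fin n → ℕ} (A : Matrix (BIdx m) (BIdx m) ℝ) (i : Fin n)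
    (T : Finset (Fin n)) : Matrix (Fin (m i)) {q : BIdx m // q.1 ∈ T} ℝ :=
  fun a q => A ⟨i, a⟩ q.val

/-- The block column submatrix `A[S, {i}]`. -/
def colM {n : ℕ} {m : Fin n → ℕ} (A : Matrix (BIdx m) (BIdx m) ℝ) (S : Finset (Fin n))
    (i : Fin n) : Matrix {p : BIdx m // p.1 ∈ S} (Fin (m i)) ℝ :=
  fun p a => A p.val ⟨i, a⟩

/-- A block sparsity pattern, given by its rows `P i ⊆ {1,…,n}`, is lower triangular and
contains the diagonal. -/
def IsLowerPattern {n : ℕ} (P : Fin n → Finset (Fin n)) : Prop :=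
  (∀ i, i ∈ P i) ∧ ∀ i j, j ∈ P i → j ≤ i

/-- `F` is the block-FSAI matrix for `A` based on the pattern `P`: identity diagonal blocks,
zero blocks outside the pattern, and `F[{i}, 𝒫̃ᵢ] = -A[{i}, 𝒫̃ᵢ] A[𝒫̃ᵢ, 𝒫̃ᵢ]⁻¹`
where `𝒫̃ᵢ = Pᵢ \ {i}`. -/
def IsFSAI {n : ℕ} {m : Fin n → ℕ} (A F : Matrix (BIdx m) (BIdx m) ℝ)
    (P : Fin n → Finset (Fin n)) : Prop :=
  (∀ i, blk F i i = 1) ∧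
  (∀ p q : BIdx m, p.1 ≠ q.1 → q.1 ∉ P p.1 → F p q = 0) ∧
  (∀ i, rowM F i ((P i).erase i) =
    -(rowM A i ((P i).erase i)) * (subM A ((P i).erase i) ((P i).erase i))⁻¹)

/-- `S` is the block-diagonal FSAI Schur-complement matrix:
`S_{ii} = A_{ii} - A[{i}, 𝒫̃ᵢ] A[𝒫̃ᵢ, 𝒫̃ᵢ]⁻¹ A[𝒫̃ᵢ, {i}]`. -/
def IsFSAISchur {n : ℕ} {m : Fin n → ℕ} (A S : Matrix (BIdx m) (BIdx m) ℝ)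
    (P : Fin n → Finset (Fin n)) : Prop :=
  (∀ p q : BIdx m, p.1 ≠ q.1 → S p q = 0) ∧
  (∀ i, blk S i i =
    blk A i i - rowM A i ((P i).erase i) * (subM A ((P i).erase i) ((P i).erase i))⁻¹ *
      colM A ((P i).erase i) i)

/-- Summing over the subtype of block indices whose block lies in `E` equals the double sum. -/
lemma sum_subtype_bidx {n : ℕ} {m : Fin n → ℕ} (E : Finset (Fin n)) (f : BIdx m → ℝ) :
    ∑ x : {r : BIdx m // r.1 ∈ E}, f x.val = ∑ j ∈ E, ∑ b : Fin (m j), f ⟨j, b⟩ := by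
  classical
  rw [← Finset.sum_subtype (Finset.univ.filter fun r : BIdx m => r.1 ∈ E)
      (fun x => by simp) f]
  have h : (Finset.univ.filter fun r : BIdx m => r.1 ∈ E)
      = E.sigma fun _ => Finset.univ := by
    ext ⟨j, b⟩; simp
  rw [h, Finset.sum_sigma]

/-- Expansion of a block row of an FSAI-type matrix against an arbitrary vector. -/
lemma fsai_row_sum {n : ℕ} {m : Fin n → ℕ} {F : Matrix (BIdx m) (BIdx m) ℝ}
    {P : Fin n → Finset (Fin n)}
    (hFdiag : ∀ i, blk F i i = 1)
    (hFzero : ∀ p q : BIdx m, p.1 ≠ q.1 → q.1 ∉ P p.1 → F p q = 0)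
    (i : Fin n) (a : Fin (m i)) (v : BIdx m → ℝ) :
    ∑ r : BIdx m, F ⟨i, a⟩ r * v r
      = v ⟨i, a⟩ + ∑ x : {r : BIdx m // r.1 ∈ (P i).erase i}, F ⟨i, a⟩ x.val * v x.val := by
  classical
  rw [← Finset.univ_sigma_univ, Finset.sum_sigma,
    ← Finset.add_sum_erase Finset.univ _ (Finset.mem_univ i)]
  congr 1
  · have h1 : ∀ b, F ⟨i, a⟩ ⟨i, b⟩ = if a = b then 1 else 0 := by
      intro b
      have h := congrFun (congrFun (hFdiag i) a) b
      simpa [blk, one_apply] using h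
    simp [h1, ite_mul]
  · rw [sum_subtype_bidx ((P i).erase i) (fun r => F ⟨i, a⟩ r * v r)]
    refine (Finset.sum_subset ?_ ?_).symm
    · intro j hj
      exact Finset.mem_erase.mpr ⟨Finset.ne_of_mem_erase hj, Finset.mem_univ j⟩
    · intro j hj hjE
      have hji : j ≠ i := (Finset.mem_erase.mp hj).1
      have hjP : j ∉ P i := fun hmem => hjE (Finset.mem_erase.mpr ⟨hji, hmem⟩)
      refine Finset.sum_eq_zero fun b _ => ?_
      rw [hFzero ⟨i, a⟩ ⟨j, b⟩ (by simpa using hji.symm) hjP, zero_mul]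

/-- A principal submatrix (along an injective index map) of a positive definite real matrix
is positive definite. -/
lemma posDef_submatrix_inj {N k : Type*} [Fintype N] [Fintype k] [DecidableEq k]
    {M : Matrix N N ℝ} (hM : M.PosDef) (e : k → N) (he : Function.Injective e) :
    (M.submatrix e e).PosDef := by
  classical
  refine posDef_iff_dotProduct_mulVec.mpr ⟨hM.1.submatrix e, fun x hx => ?_⟩
  set y : N → ℝ := fun p => ∑ a, if e a = p then x a else 0 with hy
  have hyx : ∀ a, y (e a) = x a := by
    intro a; simp [hy, he.eq_iff]
  have hy0 : y ≠ 0 := by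
    intro h
    apply hx
    funext a
    have h2 := congrFun h (e a)
    rw [hyx a] at h2; exact h2
  have hsum : ∀ g : N → ℝ, ∑ p, y p * g p = ∑ a, x a * g (e a) := by
    intro g
    simp only [hy, Finset.sum_mul, ite_mul, zero_mul]
    rw [Finset.sum_comm]
    simp [Finset.sum_ite_eq]
  have hmv : ∀ p, (M *ᵥ y) p = ∑ b, M p (e b) * x b := by
    intro p
    simp only [mulVec, dotProduct, hy, Finset.mul_sum, mul_ite, mul_zero]
    rw [Finset.sum_comm]
    simp [Finset.sum_ite_eq]
  have key : (star x) ⬝ᵥ ((M.submatrix e e) *ᵥ x) = (star y) ⬝ᵥ (M *ᵥ y) := by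
    simp only [star_trivial]
    rw [show (y ⬝ᵥ (M *ᵥ y)) = ∑ p, y p * (M *ᵥ y) p from rfl, hsum]
    simp only [hmv]
    simp [dotProduct, mulVec, submatrix_apply]
  rw [key]
  exact hM.dotProduct_mulVec_pos hy0

/-- For the block-FSAI matrices `F` and `S` of an s.p.d. matrix `A` based on a lower
triangular pattern `P`, one has `diag_𝔅(F A) = S = diag_𝔅(F A Fᵀ)`. -/
theorem fsai_bdiag_eq {n : ℕ} {m : Fin n → ℕ}
    (A F S : Matrix (BIdx m) (BIdx m) ℝ) (P : Fin n → Finset (Fin n))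
    (hA : A.PosDef) (hP : IsLowerPattern P) (hF : IsFSAI A F P) (hS : IsFSAISchur A S P) :
    bdiag (F * A) = S ∧ S = bdiag (F * A * Fᵀ) := by
  classical
  obtain ⟨hFdiag, hFzero, hFrow⟩ := hF
  obtain ⟨hSoff, hSdiag⟩ := hS
  have hsub_pd : ∀ i : Fin n,
      (subM A ((P i).erase i) ((P i).erase i)).PosDef := by
    intro i
    have h : subM A ((P i).erase i) ((P i).erase i)
        = A.submatrix Subtype.val Subtype.val := rfl
    rw [h]
    exact posDef_submatrix_inj hA _ Subtype.val_injective
  have hinv : ∀ i : Fin n,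
      (subM A ((P i).erase i) ((P i).erase i))⁻¹ * subM A ((P i).erase i) ((P i).erase i)
        = 1 := fun i =>
    Matrix.nonsing_inv_mul _ (isUnit_iff_ne_zero.mpr (hsub_pd i).det_pos.ne')
  -- diagonal blocks of F * A equal those of S
  have hdiag : ∀ (i : Fin n) (a b : Fin (m i)),
      (F * A) ⟨i, a⟩ ⟨i, b⟩ = S ⟨i, a⟩ ⟨i, b⟩ := by
    intro i a b
    have h1 : (F * A) ⟨i, a⟩ ⟨i, b⟩
        = A ⟨i, a⟩ ⟨i, b⟩ + (rowM F i ((P i).erase i) * colM A ((P i).erase i) i) a b := by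
      rw [Matrix.mul_apply, fsai_row_sum hFdiag hFzero i a (fun r => A r ⟨i, b⟩)]
      congr 1
    have h2 : S ⟨i, a⟩ ⟨i, b⟩ = blk S i i a b := rfl
    rw [h1, hFrow i, h2, hSdiag i]
    simp [Matrix.sub_apply, Matrix.neg_mul, Matrix.neg_apply, blk, sub_eq_add_neg]
  -- off-pattern entries of F * A in a block row vanish
  have hoff : ∀ (i : Fin n) (a : Fin (m i)) (x : {r : BIdx m // r.1 ∈ (P i).erase i}),
      (F * A) ⟨i, a⟩ x.val = 0 := by
    intro i a x
    have h1 : (F * A) ⟨i, a⟩ x.val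
        = A ⟨i, a⟩ x.val
          + (rowM F i ((P i).erase i) * subM A ((P i).erase i) ((P i).erase i)) a x := by
      rw [Matrix.mul_apply, fsai_row_sum hFdiag hFzero i a (fun r => A r x.val)]
      congr 1
    rw [h1, hFrow i, Matrix.mul_assoc, hinv i, Matrix.mul_one]
    simp [rowM, Matrix.neg_apply]
  refine ⟨?_, ?_⟩
  · ext ⟨i, a⟩ ⟨j, b⟩
    by_cases h : i = j
    · subst h
      simpa [bdiag] using hdiag i a b
    · simp [bdiag, h, hSoff ⟨i, a⟩ ⟨j, b⟩ h]
  · ext ⟨i, a⟩ ⟨j, b⟩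
    by_cases h : i = j
    · subst h
      have hFAF : (F * A * Fᵀ) ⟨i, a⟩ ⟨i, b⟩ = (F * A) ⟨i, a⟩ ⟨i, b⟩ := by
        rw [Matrix.mul_apply]
        have hc : ∀ r : BIdx m,
            (F * A) ⟨i, a⟩ r * Fᵀ r ⟨i, b⟩ = F ⟨i, b⟩ r * (F * A) ⟨i, a⟩ r := fun r => by
          rw [transpose_apply, mul_comm]
        rw [Finset.sum_congr rfl fun r _ => hc r,
          fsai_row_sum hFdiag hFzero i b (fun r => (F * A) ⟨i, a⟩ r)]
        simp [hoff i a]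
      simp [bdiag, hFAF, hdiag i a b]
    · simp [bdiag, h, hSoff ⟨i, a⟩ ⟨j, b⟩ h]
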